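/- Let A ∈ ℝ^{n×p} admit the compact SVD A = V₁Σ₁U₁ᵀ with U₁ᵀU₁ = V₁ᵀV₁ = I_r, Σ₁ = diag(σ₁,…,σ_r), σ_i > 0, and set d_i = σ_i², d_max = max_i d_i, d_min = min_i d_i. Let w̄ ∈ ℝ^p, w₀ = U₁U₁ᵀw₀, u = U₁ᵀ(w̄ − w₀), and let η > 0, ρ > 0 satisfy 0 < 1 − ηd_i − ηρd_i² < 1 for all i. Let ρ₀ > 0. For s ∈ {0, ρ}, let m_k^s be the iterates m₀^s = w₀, m_{k+1}^s = m_k^s − η·G₀(m_k^s + s·G₀(m_k^s)) with G₀(w) = AᵀA(w − w̄), and define the sharpness κ_s(k) = sup_{‖ε‖₂ ≤ ρ₀} [F(m_k^s + ε) − F(m_k^s)] where F(w) = ½(w − w̄)ᵀAᵀA(w − w̄). Then for every k ≥ 1: κ₀(k) − κ_ρ(k) ≥ ρ₀²·(d_min − d_max)/2 + ρ₀·( √(Σ_{i=1}^r (1 − ηd_i)^{2k} d_i² u_i²) − √(Σ_{i=1}^r (1 − ηd_i − ηρd_i²)^{2k} d_i² u_i²) ). -/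

import Mathlib

open Matrix

private lemma unorm {p r : ℕ} (U1 : Matrix (Fin p) (Fin r) ℝ) (hU : U1ᵀ * U1 = 1)
    (y : Fin r → ℝ) : ∑ j, (U1.mulVec y j)^2 = ∑ i, (y i)^2 := by
  have h : U1.mulVec y ⬝ᵥ U1.mulVec y = y ⬝ᵥ y := by
    rw [Matrix.dotProduct_mulVec, ← Matrix.mulVec_transpose, Matrix.mulVec_mulVec, hU,
      Matrix.one_mulVec]
  simpa [dotProduct, sq] using h

private lemma quadform {p r : ℕ} (U1 : Matrix (Fin p) (Fin r) ℝ) (d : Fin r → ℝ)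
    (e : Fin p → ℝ) :
    e ⬝ᵥ (U1 * Matrix.diagonal d * U1ᵀ).mulVec e = ∑ i, d i * (U1ᵀ.mulVec e i)^2 := by
  rw [← Matrix.mulVec_mulVec, ← Matrix.mulVec_mulVec, Matrix.dotProduct_mulVec,
    ← Matrix.mulVec_transpose]
  simp only [dotProduct, Matrix.mulVec_diagonal, sq]
  exact Finset.sum_congr rfl fun i _ => by ring

private lemma proj_contract {p r : ℕ} (U1 : Matrix (Fin p) (Fin r) ℝ) (hU : U1ᵀ * U1 = 1)
    (e : Fin p → ℝ) : ∑ i, (U1ᵀ.mulVec e i)^2 ≤ ∑ j, (e j)^2 := by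
  set y := U1ᵀ.mulVec e with hy
  have h1 : e ⬝ᵥ U1.mulVec y = ∑ i, (y i)^2 := by
    rw [Matrix.dotProduct_mulVec, ← Matrix.mulVec_transpose, ← hy]
    simp [dotProduct, sq]
  have h2 : ∑ j, (U1.mulVec y j)^2 = ∑ i, (y i)^2 := unorm U1 hU y
  have h3 : (0:ℝ) ≤ ∑ j, (e j - U1.mulVec y j)^2 :=
    Finset.sum_nonneg fun j _ => sq_nonneg _
  have h4 : ∑ j, (e j - U1.mulVec y j)^2
      = ∑ j, (e j)^2 - 2 * (e ⬝ᵥ U1.mulVec y) + ∑ j, (U1.mulVec y j)^2 := by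
    rw [dotProduct, Finset.mul_sum, ← Finset.sum_sub_distrib, ← Finset.sum_add_distrib]
    exact Finset.sum_congr rfl fun j _ => by ring
  rw [h1, h2] at h4
  linarith

theorem sam_is_flatter (n p r : ℕ)
    (A : Matrix (Fin n) (Fin p) ℝ)
    (U1 : Matrix (Fin p) (Fin r) ℝ) (V1 : Matrix (Fin n) (Fin r) ℝ)
    (s : Fin r → ℝ) (hs : ∀ i, 0 < s i)
    (hU : U1ᵀ * U1 = 1) (hV : V1ᵀ * V1 = 1)
    (hA : A = V1 * Matrix.diagonal s * U1ᵀ)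
    (d : Fin r → ℝ) (hd : ∀ i, d i = s i ^ 2)
    (dmax dmin : ℝ)
    (hdmax : IsGreatest (Set.range d) dmax)
    (hdmin : IsLeast (Set.range d) dmin)
    (wbar w0 : Fin p → ℝ)
    (hw0proj : w0 = (U1 * U1ᵀ).mulVec w0)
    (u : Fin r → ℝ) (hu : u = U1ᵀ.mulVec (wbar - w0))
    (η ρ : ℝ) (hη : 0 < η) (hρ : 0 < ρ)
    (hcontr : ∀ i, 0 < 1 - η * d i - η * ρ * d i ^ 2 ∧
        1 - η * d i - η * ρ * d i ^ 2 < 1)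
    (ρ0 : ℝ) (hρ0 : 0 < ρ0)
    (G0 : (Fin p → ℝ) → (Fin p → ℝ))
    (hG0 : ∀ w, G0 w = (Aᵀ * A).mulVec (w - wbar))
    (F : (Fin p → ℝ) → ℝ)
    (hF : ∀ w, F w = (1 / 2) * ((w - wbar) ⬝ᵥ (Aᵀ * A).mulVec (w - wbar)))
    (mSAM mGD : ℕ → Fin p → ℝ)
    (hS0 : mSAM 0 = w0) (hGD0 : mGD 0 = w0)
    (hS : ∀ k, mSAM (k + 1) = mSAM k - η • G0 (mSAM k + ρ • G0 (mSAM k)))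
    (hGD : ∀ k, mGD (k + 1) = mGD k - η • G0 (mGD k))
    (κ : (ℕ → Fin p → ℝ) → ℕ → ℝ)
    (hκ : ∀ m k, κ m k
        = sSup ((fun e : Fin p → ℝ => F (m k + e) - F (m k)) ''
            {e | Real.sqrt (∑ i, (e i) ^ 2) ≤ ρ0})) :
    ∀ k : ℕ, 1 ≤ k →
      ρ0 ^ 2 * (dmin - dmax) / 2
          + ρ0 * (Real.sqrt (∑ i, (1 - η * d i) ^ (2 * k) * d i ^ 2 * u i ^ 2)
              - Real.sqrt (∑ i,
                  (1 - η * d i - η * ρ * d i ^ 2) ^ (2 * k) * d i ^ 2 * u i ^ 2))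
        ≤ κ mGD k - κ mSAM k := by
  intro k hk
  -- basic positivity
  obtain ⟨imax, himax⟩ := hdmax.1
  obtain ⟨imin, himin⟩ := hdmin.1
  have hdpos : ∀ i, 0 < d i := fun i => by rw [hd i]; exact pow_pos (hs i) 2
  have hdmaxpos : 0 < dmax := himax ▸ hdpos imax
  have hdminpos : 0 < dmin := himin ▸ hdpos imin
  -- structure of AᵀA
  have hdd : Matrix.diagonal s * Matrix.diagonal s = Matrix.diagonal d := by
    have hsd : (fun i => s i * s i) = d := by funext i; rw [hd i]; ring
    rw [Matrix.diagonal_mul_diagonal, hsd]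
  have hB : Aᵀ * A = U1 * Matrix.diagonal d * U1ᵀ := by
    rw [hA, Matrix.transpose_mul, Matrix.transpose_mul, Matrix.transpose_transpose,
      Matrix.diagonal_transpose]
    simp only [Matrix.mul_assoc]
    rw [← Matrix.mul_assoc V1ᵀ V1 (Matrix.diagonal s * U1ᵀ), hV, Matrix.one_mul,
      ← Matrix.mul_assoc (Matrix.diagonal s) (Matrix.diagonal s) U1ᵀ, hdd]
  -- key identities
  have hUB : ∀ e : Fin p → ℝ,
      U1ᵀ.mulVec ((Aᵀ * A).mulVec e) = fun i => d i * (U1ᵀ.mulVec e i) := by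
    intro e
    rw [hB, Matrix.mulVec_mulVec]
    have h : U1ᵀ * (U1 * Matrix.diagonal d * U1ᵀ) = Matrix.diagonal d * U1ᵀ := by
      rw [← Matrix.mul_assoc, ← Matrix.mul_assoc, hU, Matrix.one_mul]
    rw [h, ← Matrix.mulVec_mulVec]
    funext i
    simp [Matrix.mulVec_diagonal]
  have hnorm : ∀ e : Fin p → ℝ,
      ∑ j, ((Aᵀ * A).mulVec e j)^2 = ∑ i, (d i * (U1ᵀ.mulVec e i))^2 := by
    intro e
    have h2 : (fun i => d i * (U1ᵀ.mulVec e i)) = (Matrix.diagonal d).mulVec (U1ᵀ.mulVec e) := by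
      funext i; simp [Matrix.mulVec_diagonal]
    have h : (Aᵀ * A).mulVec e = U1.mulVec (fun i => d i * (U1ᵀ.mulVec e i)) := by
      rw [h2, Matrix.mulVec_mulVec, Matrix.mulVec_mulVec, hB, Matrix.mul_assoc]
    rw [h, unorm U1 hU]
  -- trajectories in eigencoordinates
  have hx0 : U1ᵀ.mulVec (w0 - wbar) = fun i => -u i := by
    have h : w0 - wbar = -(wbar - w0) := by abel
    rw [h, Matrix.mulVec_neg, hu]
    rfl
  have hxGD : ∀ k, U1ᵀ.mulVec (mGD k - wbar) = fun i => (1 - η * d i) ^ k * (-u i) := by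
    intro k
    induction k with
    | zero => simpa [hGD0] using hx0
    | succ k ih =>
      have hstep : mGD (k+1) - wbar
          = (mGD k - wbar) - η • (Aᵀ * A).mulVec (mGD k - wbar) := by
        rw [hGD k, hG0]; abel
      rw [hstep, Matrix.mulVec_sub, Matrix.mulVec_smul, hUB, ih]
      funext i
      simp only [Pi.sub_apply, Pi.smul_apply, smul_eq_mul]
      ring
  have hxSAM : ∀ k, U1ᵀ.mulVec (mSAM k - wbar)
      = fun i => (1 - η * d i - η * ρ * d i ^ 2) ^ k * (-u i) := by
    intro k
    induction k with
    | zero => simpa [hS0] using hx0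
    | succ k ih =>
      have harg : mSAM k + ρ • G0 (mSAM k) - wbar
          = (mSAM k - wbar) + ρ • (Aᵀ * A).mulVec (mSAM k - wbar) := by
        rw [hG0]; abel
      have hstep : mSAM (k+1) - wbar
          = (mSAM k - wbar) - η • ((Aᵀ * A).mulVec (mSAM k - wbar)
              + ρ • (Aᵀ * A).mulVec ((Aᵀ * A).mulVec (mSAM k - wbar))) := by
        rw [hS k, hG0 (mSAM k + ρ • G0 (mSAM k)), harg, Matrix.mulVec_add,
          Matrix.mulVec_smul]
        abel
      rw [hstep, Matrix.mulVec_sub, Matrix.mulVec_smul, Matrix.mulVec_add,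
        Matrix.mulVec_smul, hUB ((Aᵀ * A).mulVec (mSAM k - wbar)), hUB (mSAM k - wbar), ih]
      funext i
      simp only [Pi.sub_apply, Pi.add_apply, Pi.smul_apply, smul_eq_mul]
      ring
  -- the loss increment
  have hdiff : ∀ w eps : Fin p → ℝ, F (w + eps) - F w
      = eps ⬝ᵥ (Aᵀ * A).mulVec (w - wbar) + (1/2) * (eps ⬝ᵥ (Aᵀ * A).mulVec eps) := by
    intro w eps
    have hsym : (w - wbar) ⬝ᵥ (Aᵀ * A).mulVec eps = eps ⬝ᵥ (Aᵀ * A).mulVec (w - wbar) := by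
      rw [Matrix.dotProduct_mulVec, ← Matrix.mulVec_transpose, Matrix.transpose_mul,
        Matrix.transpose_transpose, dotProduct_comm]
    have h1 : w + eps - wbar = (w - wbar) + eps := by abel
    rw [hF, hF, h1, Matrix.mulVec_add, dotProduct_add, add_dotProduct,
      add_dotProduct, hsym]
    ring
  -- pointwise upper bound on the increment
  have hptUB : ∀ (w : Fin p → ℝ) (eps : Fin p → ℝ), Real.sqrt (∑ i, (eps i)^2) ≤ ρ0 →
      F (w + eps) - F w
        ≤ ρ0 * Real.sqrt (∑ j, ((Aᵀ * A).mulVec (w - wbar) j)^2) + ρ0 ^ 2 * dmax / 2 := by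
    intro w eps heps
    rw [hdiff]
    have hsnn : (0:ℝ) ≤ ∑ i, (eps i)^2 := Finset.sum_nonneg fun i _ => sq_nonneg _
    have hsum : ∑ i, (eps i)^2 ≤ ρ0 ^ 2 := by
      nlinarith [Real.sq_sqrt hsnn, Real.sqrt_nonneg (∑ i, (eps i)^2)]
    have hcs : eps ⬝ᵥ (Aᵀ * A).mulVec (w - wbar)
        ≤ ρ0 * Real.sqrt (∑ j, ((Aᵀ * A).mulVec (w - wbar) j)^2) := by
      calc eps ⬝ᵥ (Aᵀ * A).mulVec (w - wbar)
          ≤ Real.sqrt (∑ i, (eps i)^2)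
            * Real.sqrt (∑ j, ((Aᵀ * A).mulVec (w - wbar) j)^2) :=
            Real.sum_mul_le_sqrt_mul_sqrt _ _ _
        _ ≤ ρ0 * Real.sqrt (∑ j, ((Aᵀ * A).mulVec (w - wbar) j)^2) :=
            mul_le_mul_of_nonneg_right heps (Real.sqrt_nonneg _)
    have hquad : eps ⬝ᵥ (Aᵀ * A).mulVec eps ≤ dmax * ρ0 ^ 2 := by
      rw [hB, quadform]
      calc ∑ i, d i * (U1ᵀ.mulVec eps i)^2
          ≤ ∑ i, dmax * (U1ᵀ.mulVec eps i)^2 :=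
            Finset.sum_le_sum fun i _ =>
              mul_le_mul_of_nonneg_right (hdmax.2 ⟨i, rfl⟩) (sq_nonneg _)
        _ = dmax * ∑ i, (U1ᵀ.mulVec eps i)^2 := (Finset.mul_sum _ _ _).symm
        _ ≤ dmax * ρ0 ^ 2 := by
            have h := proj_contract U1 hU eps
            nlinarith [hdmaxpos]
    linarith
  -- bounded above
  have hbdd : ∀ m : ℕ → Fin p → ℝ, BddAbove ((fun e : Fin p → ℝ => F (m k + e) - F (m k)) ''
      {e | Real.sqrt (∑ i, (e i) ^ 2) ≤ ρ0}) := by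
    intro m
    refine ⟨ρ0 * Real.sqrt (∑ j, ((Aᵀ * A).mulVec (m k - wbar) j)^2) + ρ0 ^ 2 * dmax / 2, ?_⟩
    rintro x ⟨eps, heps, rfl⟩
    exact hptUB (m k) eps heps
  -- upper bound on sharpness
  have hκUB : ∀ m : ℕ → Fin p → ℝ, κ m k
      ≤ ρ0 * Real.sqrt (∑ j, ((Aᵀ * A).mulVec (m k - wbar) j)^2) + ρ0 ^ 2 * dmax / 2 := by
    intro m
    rw [hκ]
    apply Real.sSup_le
    · rintro x ⟨eps, heps, rfl⟩
      exact hptUB (m k) eps heps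
    · have := Real.sqrt_nonneg (∑ j, ((Aᵀ * A).mulVec (m k - wbar) j)^2)
      nlinarith [hdmaxpos]
  -- lower bound on sharpness of GD
  have hκLB : ρ0 * Real.sqrt (∑ j, ((Aᵀ * A).mulVec (mGD k - wbar) j)^2)
      + ρ0 ^ 2 * dmin / 2 ≤ κ mGD k := by
    rw [hκ]
    set ek := mGD k - wbar with hek
    set v := (Aᵀ * A).mulVec ek with hv
    set t := Real.sqrt (∑ j, (v j)^2) with htdef
    have hsnn : (0:ℝ) ≤ ∑ j, (v j)^2 := Finset.sum_nonneg fun j _ => sq_nonneg _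
    have ht2 : t ^ 2 = ∑ j, (v j)^2 := Real.sq_sqrt hsnn
    have ht0 : 0 ≤ t := Real.sqrt_nonneg _
    have hvBv : dmin * ∑ j, (v j)^2 ≤ v ⬝ᵥ (Aᵀ * A).mulVec v := by
      rw [hB, quadform, hUB ek]
      calc dmin * ∑ j, (v j)^2
          = dmin * ∑ i, (d i * (U1ᵀ.mulVec ek i))^2 := by rw [hv, hnorm ek]
        _ ≤ ∑ i, d i * ((fun i => d i * (U1ᵀ.mulVec ek i)) i)^2 := by
            rw [Finset.mul_sum]
            exact Finset.sum_le_sum fun i _ =>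
              mul_le_mul_of_nonneg_right (hdmin.2 ⟨i, rfl⟩) (sq_nonneg _)
    by_cases hc : (∑ j, (v j)^2) = 0
    · -- gradient is zero
      have hv0 : ∀ j, v j = 0 := by
        intro j
        have h := (Finset.sum_eq_zero_iff_of_nonneg
          (fun j _ => sq_nonneg (v j))).mp hc j (Finset.mem_univ j)
        exact (pow_eq_zero_iff (two_ne_zero)).mp h
      have ht : t = 0 := by rw [htdef, hc, Real.sqrt_zero]
      set y0 : Fin r → ℝ := Pi.single imin 1 with hy0
      set eps0 := ρ0 • U1.mulVec y0 with heps0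
      have hy0sum : ∑ i, (y0 i)^2 = 1 := by
        rw [hy0]
        rw [Finset.sum_eq_single imin (fun b _ hb => by simp [Pi.single_apply, hb]) (by simp)]
        simp
      have hes : ∑ j, (eps0 j)^2 = ρ0^2 := by
        have h1 : ∑ j, (eps0 j)^2 = ρ0^2 * ∑ j, (U1.mulVec y0 j)^2 := by
          rw [Finset.mul_sum]
          exact Finset.sum_congr rfl fun j _ => by
            simp only [heps0, Pi.smul_apply, smul_eq_mul]; ring
        rw [h1, unorm U1 hU, hy0sum, mul_one]
      have hmem : eps0 ∈ {e : Fin p → ℝ | Real.sqrt (∑ i, (e i)^2) ≤ ρ0} := by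
        simp only [Set.mem_setOf_eq, hes]
        rw [Real.sqrt_sq hρ0.le]
      have hval : F (mGD k + eps0) - F (mGD k) = ρ0^2 * dmin / 2 := by
        rw [hdiff, ← hek, ← hv]
        have hd1 : eps0 ⬝ᵥ v = 0 := by simp [dotProduct, hv0]
        have hd2 : eps0 ⬝ᵥ (Aᵀ * A).mulVec eps0 = ρ0^2 * dmin := by
          rw [hB, quadform]
          have hUe : U1ᵀ.mulVec eps0 = ρ0 • y0 := by
            rw [heps0, Matrix.mulVec_smul, Matrix.mulVec_mulVec, hU, Matrix.one_mulVec]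
          rw [hUe, hy0]
          rw [Finset.sum_eq_single imin (fun b _ hb => by simp [Pi.single_apply, hb])
            (by simp)]
          simp [Pi.single_apply, himin]
          ring
        rw [hd1, hd2]
        ring
      have hle := le_csSup (hbdd mGD) ⟨eps0, hmem, rfl⟩
      rw [ht]
      simpa [hval] using hle
    · -- gradient is nonzero
      have htpos : 0 < t := Real.sqrt_pos.mpr (lt_of_le_of_ne hsnn (Ne.symm hc))
      set eps0 := (ρ0 / t) • v with heps0
      have hes : ∑ j, (eps0 j)^2 = ρ0^2 := by
        have h1 : ∑ j, (eps0 j)^2 = (ρ0/t)^2 * ∑ j, (v j)^2 := by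
          rw [Finset.mul_sum]
          exact Finset.sum_congr rfl fun j _ => by
            simp only [heps0, Pi.smul_apply, smul_eq_mul]; ring
        rw [h1, ← ht2]
        field_simp
      have hmem : eps0 ∈ {e : Fin p → ℝ | Real.sqrt (∑ i, (e i)^2) ≤ ρ0} := by
        simp only [Set.mem_setOf_eq, hes]
        rw [Real.sqrt_sq hρ0.le]
      have hvv : v ⬝ᵥ v = t^2 := by
        rw [ht2]; simp [dotProduct, sq]
      have hdot : eps0 ⬝ᵥ v = ρ0 * t := by
        rw [heps0, smul_dotProduct, hvv]
        field_simp
        rw [smul_eq_mul, div_mul_eq_mul_div, sq, ← mul_assoc, mul_div_cancel_right₀ _ htpos.ne']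
      have hquad : ρ0^2 * dmin ≤ eps0 ⬝ᵥ (Aᵀ * A).mulVec eps0 := by
        have h1 : eps0 ⬝ᵥ (Aᵀ * A).mulVec eps0 = (ρ0/t)^2 * (v ⬝ᵥ (Aᵀ * A).mulVec v) := by
          rw [heps0, Matrix.mulVec_smul, smul_dotProduct, dotProduct_smul]
          simp only [smul_eq_mul]
          ring
        rw [h1]
        have h2 : ρ0^2 * dmin = (ρ0/t)^2 * (dmin * (∑ j, (v j)^2)) := by
          rw [← ht2]
          field_simp
        rw [h2]
        exact mul_le_mul_of_nonneg_left hvBv (sq_nonneg _)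
      have hval : ρ0 * t + ρ0^2 * dmin / 2 ≤ F (mGD k + eps0) - F (mGD k) := by
        rw [hdiff, ← hek, ← hv]
        linarith
      exact le_trans hval (le_csSup (hbdd mGD) ⟨eps0, hmem, rfl⟩)
  -- norms of the gradients along the trajectories
  have hGDsum : ∑ j, ((Aᵀ * A).mulVec (mGD k - wbar) j)^2
      = ∑ i, (1 - η * d i) ^ (2 * k) * d i ^ 2 * u i ^ 2 := by
    rw [hnorm, hxGD k]
    refine Finset.sum_congr rfl fun i _ => ?_
    rw [two_mul, pow_add]
    ring
  have hSAMsum : ∑ j, ((Aᵀ * A).mulVec (mSAM k - wbar) j)^2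
      = ∑ i, (1 - η * d i - η * ρ * d i ^ 2) ^ (2 * k) * d i ^ 2 * u i ^ 2 := by
    rw [hnorm, hxSAM k]
    refine Finset.sum_congr rfl fun i _ => ?_
    rw [two_mul, pow_add]
    ring
  have h1 := hκUB mSAM
  rw [hSAMsum] at h1
  rw [hGDsum] at hκLB
  linarith [hκLB, h1]
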